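/- Let A : ℝⁿ → ℝᵐ be a linear map and R : ℝⁿ → ℝ a continuous, m-strongly convex function for some m > 0. Let u* ∈ ℝⁿ, set y⁰ = A u*, and let u† be the unique minimizer of R over the affine set {u ∈ ℝⁿ : Au = y⁰} (the R-minimizing solution). For y ∈ ℝᵐ and α > 0 let u(y, α) denote the unique minimizer of F_{y,α}(u) = ‖Au − y‖² + α·R(u). Suppose δ_k > 0 with δ_k → 0, y_k ∈ ℝᵐ satisfies ‖y_k − y⁰‖ ≤ δ_k for each k, and the parameter choice α_k > 0 satisfies α_k → 0 and δ_k²/α_k → 0. Then u(y_k, α_k) → u† as k → ∞. -/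

import Mathlib

open Filter Topology

private lemma quad_bound_aux {t a b : ℝ} (ht : 0 ≤ t) (ha : 0 ≤ a) (hb : 0 ≤ b)
    (h : t ^ 2 ≤ a + b * t) : t ≤ 1 + a + b := by
  nlinarith [sq_nonneg (t - 1), mul_nonneg ha ht, mul_nonneg hb ht]

/-- A continuous convex function on a proper real normed space is bounded below
by a function of the form `-(M + 2M‖v‖)`. -/
private lemma convex_lower {E : Type*} [NormedAddCommGroup E] [NormedSpace ℝ E]
    [ProperSpace E] (h : E → ℝ) (hc : Continuous h)
    (hcx : ConvexOn ℝ Set.univ h) :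
    ∃ M : ℝ, 0 ≤ M ∧ ∀ v : E, -(M + 2 * M * ‖v‖) ≤ h v := by
  obtain ⟨M0, hM0⟩ : ∃ M0, ∀ v ∈ Metric.closedBall (0 : E) 1, ‖h v‖ ≤ M0 :=
    (isCompact_closedBall (0 : E) 1).exists_bound_of_continuousOn hc.continuousOn
  refine ⟨max M0 0, le_max_right _ _, fun v => ?_⟩
  have hMb : ∀ w : E, ‖w‖ ≤ 1 → |h w| ≤ max M0 0 := fun w hw =>
    le_trans (hM0 w (by simpa [Metric.mem_closedBall, dist_zero_right] using hw))
      (le_max_left _ _)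
  set M := max M0 0 with hM
  have hMnn : (0:ℝ) ≤ M := le_max_right _ _
  rcases le_or_gt ‖v‖ 1 with hle | hgt
  · have h1 := (abs_le.mp (hMb v hle)).1
    have h2 : 0 ≤ 2 * M * ‖v‖ := by positivity
    linarith
  · have hvpos : (0:ℝ) < ‖v‖ := by linarith
    have ht0 : 0 < ‖v‖⁻¹ := by positivity
    have ht1 : ‖v‖⁻¹ ≤ 1 := inv_le_one_of_one_le₀ (le_of_lt hgt)
    have hwn : ‖‖v‖⁻¹ • v‖ = 1 := by
      rw [norm_smul, Real.norm_eq_abs, abs_of_pos ht0, inv_mul_cancel₀ (ne_of_gt hvpos)]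
    have hcx2 := hcx.2 (Set.mem_univ (0 : E)) (Set.mem_univ v)
      (by linarith : (0:ℝ) ≤ 1 - ‖v‖⁻¹) (le_of_lt ht0) (by ring)
    have hcx' : h (‖v‖⁻¹ • v) ≤ (1 - ‖v‖⁻¹) * h 0 + ‖v‖⁻¹ * h v := by
      simpa using hcx2
    have hw0 := (abs_le.mp (hMb _ (le_of_eq hwn))).1
    have h0b := (abs_le.mp (hMb 0 (by simp))).2
    have hinv : ‖v‖⁻¹ * ‖v‖ = 1 := inv_mul_cancel₀ (ne_of_gt hvpos)
    have step : -M - (1 - ‖v‖⁻¹) * M ≤ ‖v‖⁻¹ * h v := by nlinarith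
    have := mul_le_mul_of_nonneg_left step (le_of_lt hvpos)
    nlinarith [this, hinv, hMnn]

/-- Uniqueness of the `R`-minimizing solution for a strongly convex `R`. -/
private lemma unique_min {E F : Type*} [NormedAddCommGroup E] [InnerProductSpace ℝ E]
    [NormedAddCommGroup F] [NormedSpace ℝ F]
    (A : E →ₗ[ℝ] F) (R : E → ℝ) (m : ℝ) (hm : 0 < m)
    (hRsc : ConvexOn ℝ Set.univ (fun u => R u - (m / 2) * ‖u‖ ^ 2))
    (y0 : F) (udag : E) (hudag_feas : A udag = y0)
    (hudag_min : ∀ u : E, A u = y0 → R udag ≤ R u)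
    (v : E) (hv : A v = y0) (hRv : R v ≤ R udag) : v = udag := by
  by_contra hne
  have hwfeas : A ((1/2 : ℝ) • v + (1/2 : ℝ) • udag) = y0 := by
    rw [map_add, map_smul, map_smul, hv, hudag_feas, ← add_smul]
    norm_num
  have hcx := hRsc.2 (Set.mem_univ v) (Set.mem_univ udag)
    (by norm_num : (0:ℝ) ≤ 1/2) (by norm_num : (0:ℝ) ≤ 1/2) (by norm_num)
  have hcx' : R ((1/2 : ℝ) • v + (1/2 : ℝ) • udag)
      - m / 2 * ‖(1/2 : ℝ) • v + (1/2 : ℝ) • udag‖ ^ 2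
      ≤ 1/2 * (R v - m / 2 * ‖v‖ ^ 2) + 1/2 * (R udag - m / 2 * ‖udag‖ ^ 2) := by
    simpa using hcx
  have hid : ‖(1/2 : ℝ) • v + (1/2 : ℝ) • udag‖ ^ 2
      = (‖v‖ ^ 2 + ‖udag‖ ^ 2) / 2 - ‖v - udag‖ ^ 2 / 4 := by
    have h1 : ‖v + udag‖ * ‖v + udag‖ + ‖v - udag‖ * ‖v - udag‖
        = 2 * (‖v‖ * ‖v‖ + ‖udag‖ * ‖udag‖) := by
        simpa only [pow_two] using parallelogram_law_with_norm ℝ v udag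
    have h3 : ‖(1/2 : ℝ) • v + (1/2 : ℝ) • udag‖ = 1/2 * ‖v + udag‖ := by
      rw [← smul_add, norm_smul, Real.norm_eq_abs]; norm_num
    have h4 : ‖(1/2 : ℝ) • v + (1/2 : ℝ) • udag‖ ^ 2 = 1/4 * (‖v + udag‖ * ‖v + udag‖) := by
      rw [h3]; ring
    rw [h4, pow_two ‖v‖, pow_two ‖udag‖, pow_two ‖v - udag‖]
    linarith
  have hmin := hudag_min _ hwfeas
  have hpos : 0 < ‖v - udag‖ := norm_pos_iff.mpr (sub_ne_zero.mpr hne)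
  nlinarith [hcx', hid, hmin, hRv, mul_pos hm (mul_pos hpos hpos)]

private theorem stmt2_aux {E F : Type*} [NormedAddCommGroup E] [InnerProductSpace ℝ E]
    [FiniteDimensional ℝ E] [NormedAddCommGroup F] [NormedSpace ℝ F]
    (A : E →ₗ[ℝ] F)
    (R : E → ℝ) (m : ℝ) (hm : 0 < m)
    (hRcont : Continuous R)
    (hRsc : ConvexOn ℝ Set.univ (fun u => R u - (m / 2) * ‖u‖ ^ 2))
    (y0 : F)
    (udag : E)
    (hudag_feas : A udag = y0)
    (hudag_min : ∀ u : E, A u = y0 → R udag ≤ R u)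
    (sol : F → ℝ → E)
    (hsol : ∀ (y : F) (α : ℝ), 0 < α →
      ∀ u : E, ‖A (sol y α) - y‖ ^ 2 + α * R (sol y α) ≤ ‖A u - y‖ ^ 2 + α * R u)
    (δ : ℕ → ℝ) (hδ0 : Tendsto δ atTop (𝓝 0))
    (yk : ℕ → F) (hyk : ∀ k, ‖yk k - y0‖ ≤ δ k)
    (α : ℕ → ℝ) (hαpos : ∀ k, 0 < α k) (hα0 : Tendsto α atTop (𝓝 0))
    (hδα : Tendsto (fun k => δ k ^ 2 / α k) atTop (𝓝 0)) :
    Tendsto (fun k => sol (yk k) (α k)) atTop (𝓝 udag) := by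
  set u : ℕ → E := fun k => sol (yk k) (α k) with hu
  -- affine lower bound for `R - (m/2)‖·‖²`
  obtain ⟨M, hMnn, hMlow⟩ := convex_lower (fun v : E => R v - m / 2 * ‖v‖ ^ 2)
    (hRcont.sub (continuous_const.mul (continuous_norm.pow 2))) hRsc
  have hRlow : ∀ v : E, m / 2 * ‖v‖ ^ 2 - 2 * M * ‖v‖ - M ≤ R v := by
    intro v
    have := hMlow v
    linarith
  -- global lower bound for R
  obtain ⟨B, hBnn, hRglow⟩ : ∃ B : ℝ, 0 ≤ B ∧ ∀ v : E, -B ≤ R v := by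
    refine ⟨2 * M ^ 2 / m + M, by positivity, fun v => ?_⟩
    have h1 := hRlow v
    have h2 : 0 ≤ (m * ‖v‖ - 2 * M) ^ 2 / (2 * m) := by positivity
    have h3 : (m * ‖v‖ - 2 * M) ^ 2 / (2 * m)
        = m / 2 * ‖v‖ ^ 2 - 2 * M * ‖v‖ + 2 * M ^ 2 / m := by
      field_simp
      ring
    linarith
  -- fundamental inequality
  have key : ∀ k, ‖A (u k) - yk k‖ ^ 2 + α k * R (u k) ≤ δ k ^ 2 + α k * R udag := by
    intro k
    have h1 := hsol (yk k) (α k) (hαpos k) udag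
    have h2 : ‖A udag - yk k‖ ≤ δ k := by
      rw [hudag_feas, ← norm_neg]; simpa [neg_sub] using hyk k
    have h3 : ‖A udag - yk k‖ ^ 2 ≤ δ k ^ 2 := by
      have := norm_nonneg (A udag - yk k)
      nlinarith
    calc ‖A (u k) - yk k‖ ^ 2 + α k * R (u k)
        ≤ ‖A udag - yk k‖ ^ 2 + α k * R udag := h1
      _ ≤ δ k ^ 2 + α k * R udag := by linarith
  have hRk : ∀ k, R (u k) ≤ δ k ^ 2 / α k + R udag := by
    intro k
    have h1 := key k
    have h2 : 0 ≤ ‖A (u k) - yk k‖ ^ 2 := sq_nonneg _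
    have h3 : (R (u k) - R udag) * α k ≤ δ k ^ 2 := by nlinarith
    have := (le_div_iff₀ (hαpos k)).mpr h3
    linarith
  -- boundedness of the δ²/α sequence
  obtain ⟨D, hD⟩ : ∃ D, ∀ k, δ k ^ 2 / α k ≤ D := by
    obtain ⟨D, hD⟩ := hδα.bddAbove_range
    exact ⟨D, fun k => hD ⟨k, rfl⟩⟩
  -- boundedness of the sequence u
  obtain ⟨r, hub⟩ : ∃ r, ∀ k, ‖u k‖ ≤ r := by
    refine ⟨1 + 2 / m * (D + R udag + B + M) + 4 * M / m, fun k => ?_⟩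
    have h1 := hRlow (u k)
    have h2 : R (u k) ≤ D + R udag := le_trans (hRk k) (by linarith [hD k])
    have hRud : -B ≤ R udag := hRglow udag
    have hDnn : 0 ≤ D := le_trans (div_nonneg (sq_nonneg _) (hαpos 0).le) (hD 0)
    have h3 : ‖u k‖ ^ 2 ≤ 2 / m * (D + R udag + B + M) + 4 * M / m * ‖u k‖ := by
      rw [← sub_nonneg]
      have expand : 2 / m * (D + R udag + B + M) + 4 * M / m * ‖u k‖ - ‖u k‖ ^ 2
          = (2 * (D + R udag + B + M) + 4 * M * ‖u k‖ - m * ‖u k‖ ^ 2) / m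
            + (m - m) / m * ‖u k‖ ^ 2 := by
        field_simp
        ring
      rw [expand]
      have h4 : 0 ≤ (2 * (D + R udag + B + M) + 4 * M * ‖u k‖ - m * ‖u k‖ ^ 2) / m := by
        apply div_nonneg _ (le_of_lt hm)
        nlinarith
      have h5 : (m - m) / m * ‖u k‖ ^ 2 = 0 := by simp
      linarith
    have ha : 0 ≤ 2 / m * (D + R udag + B + M) := by
      have : 0 ≤ D + R udag + B := by linarith
      positivity
    have hb : 0 ≤ 4 * M / m := by positivity
    have := quad_bound_aux (norm_nonneg (u k)) ha hb h3
    linarith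
  have hbdd : Bornology.IsBounded (Metric.closedBall (0 : E) r) := Metric.isBounded_closedBall
  have humem : ∀ k, u k ∈ Metric.closedBall (0 : E) r := by
    intro k; rw [Metric.mem_closedBall, dist_zero_right]; exact hub k
  -- residual tends to zero
  have hres : Tendsto (fun k => ‖A (u k) - yk k‖) atTop (𝓝 0) := by
    have hsq : Tendsto (fun k => ‖A (u k) - yk k‖ ^ 2) atTop (𝓝 0) := by
      have hg : Tendsto (fun k => δ k ^ 2 + α k * (R udag + B)) atTop (𝓝 0) := by
        have h1 : Tendsto (fun k => δ k ^ 2) atTop (𝓝 0) := by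
          have := hδ0.mul hδ0
          simpa [pow_two] using this
        have h2 : Tendsto (fun k => α k * (R udag + B)) atTop (𝓝 0) := by
          simpa using hα0.mul_const (R udag + B)
        simpa using h1.add h2
      refine squeeze_zero (fun k => sq_nonneg _) (fun k => ?_) hg
      have h1 := key k
      have h2 := hRglow (u k)
      have h3 := mul_le_mul_of_nonneg_left h2 (le_of_lt (hαpos k))
      nlinarith [hαpos k]
    have : Tendsto (fun k => Real.sqrt (‖A (u k) - yk k‖ ^ 2)) atTop (𝓝 (Real.sqrt 0)) :=
      (Real.continuous_sqrt.tendsto 0).comp hsq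
    simpa [Real.sqrt_sq (norm_nonneg _)] using this
  have hA0 : Tendsto (fun k => ‖A (u k) - y0‖) atTop (𝓝 0) := by
    have hbnd : ∀ k, ‖A (u k) - y0‖ ≤ ‖A (u k) - yk k‖ + δ k := by
      intro k
      calc ‖A (u k) - y0‖ = ‖(A (u k) - yk k) + (yk k - y0)‖ := by
            congr 1; abel
        _ ≤ ‖A (u k) - yk k‖ + ‖yk k - y0‖ := norm_add_le _ _
        _ ≤ ‖A (u k) - yk k‖ + δ k := by linarith [hyk k]
    have hg : Tendsto (fun k => ‖A (u k) - yk k‖ + δ k) atTop (𝓝 0) := by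
      simpa using hres.add hδ0
    exact squeeze_zero (fun k => norm_nonneg _) hbnd hg
  -- continuity of A
  have hAcont : Continuous fun v : E => A v := A.continuous_of_finiteDimensional
  -- final subsequence argument
  apply tendsto_of_subseq_tendsto
  intro ns hns
  obtain ⟨a, -, φ, hφ, hconv⟩ := tendsto_subseq_of_bounded hbdd (fun i => humem (ns i))
  have hconv' : Tendsto (fun i => u (ns (φ i))) atTop (𝓝 a) := hconv
  have hsub : Tendsto (fun i => ns (φ i)) atTop atTop := hns.comp hφ.tendsto_atTop
  have haA : A a = y0 := by
    have h1 : Tendsto (fun i => ‖A (u (ns (φ i))) - y0‖) atTop (𝓝 ‖A a - y0‖) :=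
      ((continuous_norm.comp (hAcont.sub continuous_const)).tendsto a).comp hconv'
    have h2 : Tendsto (fun i => ‖A (u (ns (φ i))) - y0‖) atTop (𝓝 0) := hA0.comp hsub
    have h3 := tendsto_nhds_unique h1 h2
    rwa [norm_eq_zero, sub_eq_zero] at h3
  have haR : R a ≤ R udag := by
    have h1 : Tendsto (fun i => R (u (ns (φ i)))) atTop (𝓝 (R a)) :=
      (hRcont.tendsto a).comp hconv'
    have h2 : Tendsto (fun i => δ (ns (φ i)) ^ 2 / α (ns (φ i)) + R udag) atTop
        (𝓝 (0 + R udag)) := (hδα.comp hsub).add_const _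
    have h3 : ∀ i, R (u (ns (φ i))) ≤ δ (ns (φ i)) ^ 2 / α (ns (φ i)) + R udag :=
      fun i => hRk _
    have := le_of_tendsto_of_tendsto' h1 h2 h3
    simpa using this
  have haeq : a = udag :=
    unique_min A R m hm hRsc y0 udag hudag_feas hudag_min a haA haR
  exact ⟨φ, by rw [← haeq]; exact hconv'⟩

/-- **Convergent regularization.** With `A` linear, `R` continuous and `m`-strongly
convex, `y⁰ = A u*`, `u†` the `R`-minimizing solution of `Au = y⁰`, and `sol y α`
the minimizer of `‖Au − y‖² + α R(u)`. If `δ_k → 0`, `‖y_k − y⁰‖ ≤ δ_k`, `α_k → 0`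
and `δ_k²/α_k → 0`, then `sol y_k α_k → u†`. -/
theorem stmt2 {n m' : ℕ}
    (A : EuclideanSpace ℝ (Fin n) →ₗ[ℝ] EuclideanSpace ℝ (Fin m'))
    (R : EuclideanSpace ℝ (Fin n) → ℝ) (m : ℝ) (hm : 0 < m)
    (hRcont : Continuous R)
    (hRsc : ConvexOn ℝ Set.univ (fun u => R u - (m / 2) * ‖u‖ ^ 2))
    (ustar : EuclideanSpace ℝ (Fin n))
    (y0 : EuclideanSpace ℝ (Fin m')) (hy0 : y0 = A ustar)
    (udag : EuclideanSpace ℝ (Fin n))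
    (hudag_feas : A udag = y0)
    (hudag_min : ∀ u : EuclideanSpace ℝ (Fin n), A u = y0 → R udag ≤ R u)
    (sol : EuclideanSpace ℝ (Fin m') → ℝ → EuclideanSpace ℝ (Fin n))
    (hsol : ∀ (y : EuclideanSpace ℝ (Fin m')) (α : ℝ), 0 < α →
      ∀ u : EuclideanSpace ℝ (Fin n),
        ‖A (sol y α) - y‖ ^ 2 + α * R (sol y α) ≤ ‖A u - y‖ ^ 2 + α * R u)
    (δ : ℕ → ℝ) (hδpos : ∀ k, 0 < δ k) (hδ0 : Tendsto δ atTop (𝓝 0))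
    (yk : ℕ → EuclideanSpace ℝ (Fin m')) (hyk : ∀ k, ‖yk k - y0‖ ≤ δ k)
    (α : ℕ → ℝ) (hαpos : ∀ k, 0 < α k) (hα0 : Tendsto α atTop (𝓝 0))
    (hδα : Tendsto (fun k => δ k ^ 2 / α k) atTop (𝓝 0)) :
    Tendsto (fun k => sol (yk k) (α k)) atTop (𝓝 udag) :=
  stmt2_aux A R m hm hRcont hRsc y0 udag hudag_feas hudag_min sol hsol
    δ hδ0 yk hyk α hαpos hα0 hδα
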